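/- Let Z ~ N(η, 2η) with η = x²/2 for some x > 0, and ε ≥ 0, δ ∈ (0,1). Then P[Z ≥ ε] − e^ε P[Z ≤ −ε] ≤ δ if and only if x ≤ B, where B is the unique positive root of Φ(x/2 − ε/x) − e^ε Φ(−x/2 − ε/x) = δ. -/

import Mathlib

open MeasureTheory ProbabilityTheory Filter

noncomputable def frob {m n : ℕ} (M : Matrix (Fin m) (Fin n) ℝ) : ℝ :=
  Real.sqrt (∑ i, ∑ j, (M i j)^2)

noncomputable def sv {m n : ℕ} (M : Matrix (Fin m) (Fin n) ℝ) : Fin n → ℝ :=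
  fun i => Real.sqrt ((show (Matrix.transpose M * M).IsHermitian by
    simpa using Matrix.isHermitian_conjTranspose_mul_self M).eigenvalues i)

/-- `σ` is the non-increasingly ordered tuple of singular values of `M`. -/
def IsSVals {m n : ℕ} (M : Matrix (Fin m) (Fin n) ℝ) (σ : Fin n → ℝ) : Prop :=
  Antitone σ ∧ ∃ e : Equiv.Perm (Fin n), σ = sv M ∘ e

/-- Standard normal CDF. -/
noncomputable def Phi (t : ℝ) : ℝ :=
  (Real.sqrt (2 * Real.pi))⁻¹ * ∫ u in Set.Iic t, Real.exp (-u^2/2)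

open Real in
lemma std_integrable : Integrable (fun u : ℝ => Real.exp (-u^2/2)) := by
  have h := integrable_exp_neg_mul_sq (by norm_num : (0:ℝ) < 1/2)
  convert h using 2 with u
  ring_nf

lemma std_continuous : Continuous (fun u : ℝ => Real.exp (-u^2/2)) := by fun_prop

open Real in
lemma hasDerivAt_Phi (t : ℝ) :
    HasDerivAt Phi ((Real.sqrt (2 * Real.pi))⁻¹ * Real.exp (-t^2/2)) t := by
  have hPhi : Phi = fun s => (Real.sqrt (2 * Real.pi))⁻¹ *
      ((∫ u in Set.Iic (0:ℝ), Real.exp (-u^2/2)) + ∫ u in (0:ℝ)..s, Real.exp (-u^2/2)) := by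
    funext s
    rw [Phi, ← intervalIntegral.integral_Iic_sub_Iic std_integrable.integrableOn
      std_integrable.integrableOn]
    ring
  rw [hPhi]
  have hd : HasDerivAt (fun s => ∫ u in (0:ℝ)..s, Real.exp (-u^2/2)) (Real.exp (-t^2/2)) t :=
    intervalIntegral.integral_hasDerivAt_right std_integrable.intervalIntegrable
      std_continuous.aestronglyMeasurable.stronglyMeasurableAtFilter
      std_continuous.continuousAt
  exact (hd.const_add _).const_mul _

lemma gauss01_Iic (s : ℝ) : ((gaussianReal 0 1) (Set.Iic s)).toReal = Phi s := by
  rw [gaussianReal_apply_eq_integral 0 one_ne_zero, ENNReal.toReal_ofReal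
    (setIntegral_nonneg measurableSet_Iic fun u _ => gaussianPDFReal_nonneg _ _ _)]
  rw [Phi, ← integral_const_mul]
  congr 1 with u
  simp [gaussianPDFReal]

lemma map_neg_gauss : (gaussianReal 0 1).map (fun t : ℝ => (-1) * t) = gaussianReal 0 1 := by
  rw [gaussianReal_map_const_mul]
  norm_num

lemma gauss01_Ici (s : ℝ) : ((gaussianReal 0 1) (Set.Ici s)).toReal = Phi (-s) := by
  conv_lhs => rw [← map_neg_gauss]
  rw [Measure.map_apply (by fun_prop) measurableSet_Ici]
  have h : (fun t : ℝ => (-1) * t) ⁻¹' Set.Ici s = Set.Iic (-s) := by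
    ext t; simp
  rw [h, gauss01_Iic]

lemma gauss_map (x : ℝ) :
    gaussianReal (x^2/2) (Real.toNNReal (x^2))
      = (gaussianReal 0 1).map (fun t => x*t + x^2/2) := by
  have h1 : (fun t : ℝ => x*t + x^2/2) = (fun t => t + x^2/2) ∘ (fun t => x*t) := rfl
  rw [h1, ← Measure.map_map (measurable_add_const _) (measurable_const_mul _),
    gaussianReal_map_const_mul, gaussianReal_map_add_const]
  norm_num
  congr 1
  ext
  simp [Real.coe_toNNReal _ (sq_nonneg x)]

lemma gauss_Ici' (x ε : ℝ) (hx : 0 < x) :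
    ((gaussianReal (x^2/2) (Real.toNNReal (x^2))) (Set.Ici ε)).toReal = Phi (x/2 - ε/x) := by
  rw [gauss_map x, Measure.map_apply (by fun_prop) measurableSet_Ici]
  have h : (fun t : ℝ => x*t + x^2/2) ⁻¹' Set.Ici ε = Set.Ici ((ε - x^2/2)/x) := by
    ext t
    simp only [Set.mem_preimage, Set.mem_Ici, div_le_iff₀ hx]
    constructor <;> intro h <;> nlinarith
  rw [h, gauss01_Ici]
  congr 1
  field_simp
  ring

lemma gauss_Iic' (x ε : ℝ) (hx : 0 < x) :
    ((gaussianReal (x^2/2) (Real.toNNReal (x^2))) (Set.Iic (-ε))).toReal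
      = Phi (-x/2 - ε/x) := by
  rw [gauss_map x, Measure.map_apply (by fun_prop) measurableSet_Iic]
  have h : (fun t : ℝ => x*t + x^2/2) ⁻¹' Set.Iic (-ε) = Set.Iic ((-ε - x^2/2)/x) := by
    ext t
    simp only [Set.mem_preimage, Set.mem_Iic, le_div_iff₀ hx]
    constructor <;> intro h <;> nlinarith
  rw [h, gauss01_Iic]
  congr 1
  field_simp
  ring

open Real in
lemma f_deriv (ε : ℝ) {y : ℝ} (hy : 0 < y) :
    HasDerivAt (fun y => Phi (y/2 - ε/y) - Real.exp ε * Phi (-y/2 - ε/y))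
      ((Real.sqrt (2*π))⁻¹ * Real.exp (-(y/2 - ε/y)^2/2)) y := by
  have hy0 : y ≠ 0 := hy.ne'
  have hinv : HasDerivAt (fun y : ℝ => ε / y) (-(ε / y^2)) y := by
    have h := (hasDerivAt_inv hy0).const_mul ε
    refine h.congr_deriv ?_
    field_simp
  have h1 : HasDerivAt (fun y : ℝ => y/2 - ε/y) (1/2 + ε/y^2) y := by
    have h := ((hasDerivAt_id y).div_const 2).sub hinv
    refine h.congr_deriv ?_
    ring
  have h2 : HasDerivAt (fun y : ℝ => -y/2 - ε/y) (-(1/2) + ε/y^2) y := by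
    have h := (((hasDerivAt_id y).neg).div_const 2).sub hinv
    refine h.congr_deriv ?_
    ring
  have hA := (hasDerivAt_Phi (y/2 - ε/y)).comp y h1
  have hB := ((hasDerivAt_Phi (-y/2 - ε/y)).comp y h2).const_mul (Real.exp ε)
  have hAB := hA.sub hB
  have hkey : Real.exp ε * Real.exp (-(-y/2 - ε/y)^2/2) = Real.exp (-(y/2 - ε/y)^2/2) := by
    rw [← Real.exp_add]
    congr 1
    field_simp
    ring
  refine hAB.congr_deriv (Eq.symm ?_)
  linear_combination ((Real.sqrt (2*π))⁻¹ * (-(1/2)+ε/y^2)) * hkey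

open Real in
lemma f_strictMono (ε : ℝ) :
    StrictMonoOn (fun y => Phi (y/2 - ε/y) - Real.exp ε * Phi (-y/2 - ε/y)) (Set.Ioi 0) := by
  apply strictMonoOn_of_deriv_pos (convex_Ioi 0)
  · exact fun y hy => ((f_deriv ε hy).continuousAt.continuousWithinAt)
  · intro y hy
    rw [interior_Ioi] at hy
    rw [(f_deriv ε hy).deriv]
    have h2π : (0:ℝ) < Real.sqrt (2*π) := Real.sqrt_pos.2 (by positivity)
    positivity

theorem stmt10 (ε δ x B : ℝ) (hε : 0 ≤ ε) (hδ : δ ∈ Set.Ioo (0:ℝ) 1) (hx : 0 < x)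
    (hB : 0 < B)
    (hroot : Phi (B/2 - ε/B) - Real.exp ε * Phi (-B/2 - ε/B) = δ) :
    ((gaussianReal (x^2/2) (Real.toNNReal (x^2))) (Set.Ici ε)).toReal
      - Real.exp ε * ((gaussianReal (x^2/2) (Real.toNNReal (x^2))) (Set.Iic (-ε))).toReal ≤ δ
    ↔ x ≤ B := by
  rw [gauss_Ici' x ε hx, gauss_Iic' x ε hx, ← hroot]
  exact (f_strictMono ε).le_iff_le (Set.mem_Ioi.2 hx) (Set.mem_Ioi.2 hB)
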